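/- arXiv:0809.2436 — 3 statements merged into one kernel-verified Lean document; each statement's English description precedes it below -/
import Mathlib

section
/- If f : ℝ → ℝ is continuous, bounded on [0,∞), then the Szasz operator S_N(f)(x) = e^{-Nx} ∑_{k=0}^∞ f(k/N) (Nx)^k / k! converges to f(x) as N → ∞, uniformly on every compact subset of (0,∞). -/
open Filter

lemma exp_tsum' (t : ℝ) : ∑' k : ℕ, t ^ k / (Nat.factorial k : ℝ) = Real.exp t := by
  rw [Real.exp_eq_exp_ℝ, NormedSpace.exp_eq_tsum_div]

lemma g1_eq (t : ℝ) (k : ℕ) : ((k+1:ℕ):ℝ) * t ^ (k+1) / (Nat.factorial (k+1) : ℝ)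
    = t * (t ^ k / (Nat.factorial k : ℝ)) := by
  have h : (Nat.factorial (k+1) : ℝ) = ((k:ℝ)+1) * (Nat.factorial k : ℝ) := by
    push_cast [Nat.factorial_succ]; ring
  have hk : ((k:ℝ)+1) ≠ 0 := by positivity
  have hf : (Nat.factorial k : ℝ) ≠ 0 := Nat.cast_ne_zero.mpr (Nat.factorial_ne_zero k)
  rw [h]; push_cast; field_simp; ring

lemma sum1_summable (t : ℝ) : Summable (fun k : ℕ => (k:ℝ) * t ^ k / (Nat.factorial k : ℝ)) := by
  rw [← summable_nat_add_iff 1]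
  exact ((Real.summable_pow_div_factorial t).mul_left t).congr fun k => (g1_eq t k).symm

lemma sum1 (t : ℝ) : ∑' k : ℕ, (k:ℝ) * t ^ k / (Nat.factorial k : ℝ) = t * Real.exp t := by
  rw [Summable.tsum_eq_zero_add (sum1_summable t)]
  simp only [Nat.cast_zero, zero_mul, zero_div, zero_add]
  rw [tsum_congr (g1_eq t), tsum_mul_left, exp_tsum']

lemma g2_eq (t : ℝ) (k : ℕ) : ((k+2:ℕ):ℝ) * ((k+2:ℕ)-1) * t ^ (k+2) / (Nat.factorial (k+2) : ℝ)
    = t^2 * (t ^ k / (Nat.factorial k : ℝ)) := by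
  have h : (Nat.factorial (k+2) : ℝ) = ((k:ℝ)+2) * (((k:ℝ)+1) * (Nat.factorial k : ℝ)) := by
    push_cast [Nat.factorial_succ]; ring
  have hk1 : ((k:ℝ)+1) ≠ 0 := by positivity
  have hk2 : ((k:ℝ)+2) ≠ 0 := by positivity
  have hf : (Nat.factorial k : ℝ) ≠ 0 := Nat.cast_ne_zero.mpr (Nat.factorial_ne_zero k)
  rw [h]; push_cast; field_simp; ring

lemma sum2_summable (t : ℝ) :
    Summable (fun k : ℕ => (k:ℝ) * ((k:ℝ)-1) * t ^ k / (Nat.factorial k : ℝ)) := by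
  rw [← summable_nat_add_iff 2]
  refine ((Real.summable_pow_div_factorial t).mul_left (t^2)).congr fun k => ?_
  have := (g2_eq t k).symm
  push_cast at this ⊢
  convert this using 2 <;> ring

lemma sum2 (t : ℝ) :
    ∑' k : ℕ, (k:ℝ) * ((k:ℝ)-1) * t ^ k / (Nat.factorial k : ℝ) = t^2 * Real.exp t := by
  rw [Summable.tsum_eq_zero_add (sum2_summable t)]
  rw [Summable.tsum_eq_zero_add ((summable_nat_add_iff 1).mpr (sum2_summable t))]
  norm_num
  have : ∀ k : ℕ, ((k:ℝ)+1+1) * ((k:ℝ)+1) * t ^ (k+1+1) / (Nat.factorial (k+1+1) : ℝ)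
      = t^2 * (t ^ k / (Nat.factorial k : ℝ)) := by
    intro k
    have := g2_eq t k
    push_cast at this ⊢
    convert this using 2 <;> ring
  rw [tsum_congr this, tsum_mul_left, exp_tsum']

lemma var_summable (t c : ℝ) :
    Summable (fun k : ℕ => ((k:ℝ)-c)^2 * (t^k / (Nat.factorial k : ℝ))) := by
  have h := ((sum2_summable t).add ((sum1_summable t).mul_left (1-2*c))).add
    ((Real.summable_pow_div_factorial t).mul_left (c^2))
  refine h.congr fun k => ?_
  ring

lemma var_tsum (t : ℝ) :
    ∑' k : ℕ, ((k:ℝ)-t)^2 * (t^k / (Nat.factorial k : ℝ)) = t * Real.exp t := by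
  have hdecomp : ∀ k : ℕ, ((k:ℝ)-t)^2 * (t^k / (Nat.factorial k : ℝ))
      = (k:ℝ) * ((k:ℝ)-1) * t ^ k / (Nat.factorial k : ℝ)
        + ((1-2*t) * ((k:ℝ) * t ^ k / (Nat.factorial k : ℝ))
        + t^2 * (t^k / (Nat.factorial k : ℝ))) := by
    intro k; ring
  rw [tsum_congr hdecomp, Summable.tsum_add (sum2_summable t)
    (((sum1_summable t).mul_left (1-2*t)).add
      ((Real.summable_pow_div_factorial t).mul_left (t^2))),
    Summable.tsum_add ((sum1_summable t).mul_left (1-2*t))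
      ((Real.summable_pow_div_factorial t).mul_left (t^2)),
    tsum_mul_left, tsum_mul_left, sum2, sum1, exp_tsum']
  ring

lemma szasz_est (f : ℝ → ℝ) (C : ℝ) (hC : ∀ y : ℝ, 0 ≤ y → |f y| ≤ C) (N : ℕ) (hN : 1 ≤ N)
    (x : ℝ) (hx : 0 ≤ x) (ε c : ℝ)
    (hpt : ∀ y : ℝ, 0 ≤ y → |f y - f x| ≤ ε + c * (y - x)^2) :
    |Real.exp (-((N:ℝ)*x)) * ∑' k : ℕ, f ((k:ℝ)/(N:ℝ)) * ((N:ℝ)*x)^k / (Nat.factorial k : ℝ)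
      - f x| ≤ ε + c * x / N := by
  have hNR : (0:ℝ) < N := by exact_mod_cast hN
  set t : ℝ := (N:ℝ) * x with ht_def
  have ht : 0 ≤ t := by positivity
  have hterm : ∀ k : ℕ, (0:ℝ) ≤ t^k / (Nat.factorial k : ℝ) := by
    intro k; positivity
  -- summability facts
  have s0 : Summable (fun k : ℕ => t^k / (Nat.factorial k : ℝ)) :=
    Real.summable_pow_div_factorial t
  have sa : Summable (fun k : ℕ => f ((k:ℝ)/(N:ℝ)) * (t^k / (Nat.factorial k : ℝ))) := by
    refine (Summable.of_nonneg_of_le (fun k => abs_nonneg _)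
      (fun k => ?_) (s0.mul_left C)).of_abs
    rw [abs_mul, abs_of_nonneg (hterm k)]
    exact mul_le_mul_of_nonneg_right (hC _ (by positivity)) (hterm k)
  have sdiff : Summable (fun k : ℕ =>
      (f ((k:ℝ)/(N:ℝ)) - f x) * (t^k / (Nat.factorial k : ℝ))) := by
    refine (sa.sub (s0.mul_left (f x))).congr fun k => ?_
    show _ - _ = _
    ring
  have svar : Summable (fun k : ℕ =>
      ((k:ℝ)/(N:ℝ) - x)^2 * (t^k / (Nat.factorial k : ℝ))) := by
    refine ((var_summable t t).mul_left ((1:ℝ)/(N:ℝ)^2)).congr fun k => ?_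
    show (1:ℝ)/(N:ℝ)^2 * (((k:ℝ)-t)^2 * _) = _
    rw [ht_def]
    field_simp
    try ring
  have sabs : Summable (fun k : ℕ =>
      |f ((k:ℝ)/(N:ℝ)) - f x| * (t^k / (Nat.factorial k : ℝ))) := by
    refine Summable.of_nonneg_of_le (fun k => by positivity) (fun k => ?_)
      ((s0.mul_left ε).add (svar.mul_left c))
    show _ ≤ ε * _ + c * _
    have h1 := hpt ((k:ℝ)/(N:ℝ)) (by positivity)
    nlinarith [hterm k, abs_nonneg (f ((k:ℝ)/(N:ℝ)) - f x)]
  -- rewrite the Szasz sum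
  have hrw : (∑' k : ℕ, f ((k:ℝ)/(N:ℝ)) * t^k / (Nat.factorial k : ℝ))
      = ∑' k : ℕ, f ((k:ℝ)/(N:ℝ)) * (t^k / (Nat.factorial k : ℝ)) :=
    tsum_congr fun k => by rw [mul_div_assoc]
  have hsplit : ∑' k : ℕ, (f ((k:ℝ)/(N:ℝ)) - f x) * (t^k / (Nat.factorial k : ℝ))
      = (∑' k : ℕ, f ((k:ℝ)/(N:ℝ)) * (t^k / (Nat.factorial k : ℝ)))
        - f x * ∑' k : ℕ, t^k / (Nat.factorial k : ℝ) := by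
    rw [← tsum_mul_left, ← Summable.tsum_sub sa (s0.mul_left (f x))]
    exact tsum_congr fun k => by ring
  have hcancel : Real.exp (-t) * (f x * Real.exp t) = f x := by
    rw [Real.exp_neg]
    field_simp
  have hdiff : Real.exp (-t) * (∑' k : ℕ, f ((k:ℝ)/(N:ℝ)) * t^k / (Nat.factorial k : ℝ)) - f x
      = Real.exp (-t) * ∑' k : ℕ,
        (f ((k:ℝ)/(N:ℝ)) - f x) * (t^k / (Nat.factorial k : ℝ)) := by
    rw [hrw, hsplit, exp_tsum', mul_sub, hcancel]
  rw [hdiff, abs_mul, abs_of_nonneg (Real.exp_nonneg _)]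
  -- bound |tsum| ≤ tsum of abs ≤ tsum of (ε + c (y-x)^2) weight
  have habs : |∑' k : ℕ, (f ((k:ℝ)/(N:ℝ)) - f x) * (t^k / (Nat.factorial k : ℝ))|
      ≤ ∑' k : ℕ, |f ((k:ℝ)/(N:ℝ)) - f x| * (t^k / (Nat.factorial k : ℝ)) := by
    calc |∑' k : ℕ, (f ((k:ℝ)/(N:ℝ)) - f x) * (t^k / (Nat.factorial k : ℝ))|
        ≤ ∑' k : ℕ, |(f ((k:ℝ)/(N:ℝ)) - f x) * (t^k / (Nat.factorial k : ℝ))| := by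
          have hs : Summable (fun k : ℕ =>
              ‖(f ((k:ℝ)/(N:ℝ)) - f x) * (t^k / (Nat.factorial k : ℝ))‖) := by
            refine sabs.congr fun k => ?_
            rw [Real.norm_eq_abs, abs_mul, abs_of_nonneg (hterm k)]
          have := norm_tsum_le_tsum_norm hs
          simpa only [Real.norm_eq_abs] using this
      _ = _ := tsum_congr fun k => by
          rw [abs_mul, abs_of_nonneg (hterm k)]
  have hbound : (∑' k : ℕ, |f ((k:ℝ)/(N:ℝ)) - f x| * (t^k / (Nat.factorial k : ℝ)))
      ≤ ∑' k : ℕ, (ε * (t^k / (Nat.factorial k : ℝ))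
        + c * (((k:ℝ)/(N:ℝ) - x)^2 * (t^k / (Nat.factorial k : ℝ)))) := by
    refine Summable.tsum_le_tsum (fun k => ?_) sabs ((s0.mul_left ε).add (svar.mul_left c))
    have h1 := hpt ((k:ℝ)/(N:ℝ)) (by positivity)
    nlinarith [hterm k, abs_nonneg (f ((k:ℝ)/(N:ℝ)) - f x)]
  have hvar_val : (∑' k : ℕ, ((k:ℝ)/(N:ℝ) - x)^2 * (t^k / (Nat.factorial k : ℝ)))
      = x / N * Real.exp t := by
    have hcongr : ∀ k : ℕ, ((k:ℝ)/(N:ℝ) - x)^2 * (t^k / (Nat.factorial k : ℝ))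
        = (1:ℝ)/(N:ℝ)^2 * (((k:ℝ)-t)^2 * (t^k / (Nat.factorial k : ℝ))) := by
      intro k
      rw [ht_def]
      field_simp
      try ring
    rw [tsum_congr hcongr, tsum_mul_left, var_tsum, ht_def]
    field_simp
    try ring
  have hsum_val : (∑' k : ℕ, (ε * (t^k / (Nat.factorial k : ℝ))
        + c * (((k:ℝ)/(N:ℝ) - x)^2 * (t^k / (Nat.factorial k : ℝ)))))
      = ε * Real.exp t + c * (x / N * Real.exp t) := by
    rw [Summable.tsum_add (s0.mul_left ε) (svar.mul_left c), tsum_mul_left, tsum_mul_left,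
      exp_tsum', hvar_val]
  calc Real.exp (-t) * |∑' k : ℕ, (f ((k:ℝ)/(N:ℝ)) - f x) * (t^k / (Nat.factorial k : ℝ))|
      ≤ Real.exp (-t) * (ε * Real.exp t + c * (x / N * Real.exp t)) := by
        refine mul_le_mul_of_nonneg_left ?_ (Real.exp_nonneg _)
        rw [← hsum_val]
        exact habs.trans hbound
    _ = ε + c * x / N := by
        rw [Real.exp_neg]
        field_simp
        try ring

/-- If `f : ℝ → ℝ` is continuous and bounded on `[0,∞)`, then the Szasz operator
`S_N(f)(x) = e^{-Nx} ∑_{k=0}^∞ f(k/N) (Nx)^k / k!` converges to `f` as `N → ∞`,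
uniformly on every compact subset of `(0,∞)`. -/
theorem szasz_tendstoUniformlyOn (f : ℝ → ℝ) (hf : Continuous f)
    (hbd : ∃ C : ℝ, ∀ x : ℝ, 0 ≤ x → |f x| ≤ C)
    (K : Set ℝ) (hK : IsCompact K) (hKsub : K ⊆ Set.Ioi (0 : ℝ)) :
    TendstoUniformlyOn
      (fun (N : ℕ) (x : ℝ) =>
        Real.exp (-(N * x)) * ∑' k : ℕ, f (k / N) * (N * x) ^ k / (Nat.factorial k))
      f atTop K := by
  obtain ⟨C, hC⟩ := hbd
  have hC0 : 0 ≤ C := (abs_nonneg _).trans (hC 0 le_rfl)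
  obtain ⟨M0, hM0⟩ := hK.bddAbove
  set M : ℝ := max M0 0 with hM_def
  have hM0' : ∀ x ∈ K, x ≤ M := fun x hx => (hM0 hx).trans (le_max_left _ _)
  have hM : 0 ≤ M := le_max_right _ _
  rw [Metric.tendstoUniformlyOn_iff]
  intro ε hε
  -- uniform continuity on [0, M+1]
  have hUC : UniformContinuousOn f (Set.Icc 0 (M+1)) :=
    isCompact_Icc.uniformContinuousOn_of_continuous hf.continuousOn
  rw [Metric.uniformContinuousOn_iff] at hUC
  obtain ⟨δ, hδpos, hδ⟩ := hUC (ε/4) (by positivity)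
  set δ' : ℝ := min δ 1 with hδ'_def
  have hδ'0 : 0 < δ' := lt_min hδpos one_pos
  set c : ℝ := 2*C/δ'^2 with hc_def
  have hc0 : 0 ≤ c := by positivity
  -- pointwise estimate
  have key : ∀ x ∈ K, ∀ y : ℝ, 0 ≤ y → |f y - f x| ≤ ε/4 + c * (y - x)^2 := by
    intro x hx y hy
    have hx0 : 0 < x := hKsub hx
    have hxM : x ≤ M := hM0' x hx
    by_cases hcase : |y - x| < δ'
    · have hy1 : y ≤ M + 1 := by
        have : y - x ≤ |y - x| := le_abs_self _
        have : |y - x| ≤ 1 := (hcase.le.trans (min_le_right _ _))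
        nlinarith [le_abs_self (y - x)]
      have h1 : y ∈ Set.Icc (0:ℝ) (M+1) := ⟨hy, hy1⟩
      have h2 : x ∈ Set.Icc (0:ℝ) (M+1) := ⟨hx0.le, by linarith⟩
      have := hδ y h1 x h2 (by
        rw [Real.dist_eq]
        exact hcase.trans_le (min_le_left _ _))
      rw [Real.dist_eq] at this
      have hnn : 0 ≤ c * (y - x)^2 := by positivity
      linarith
    · push_neg at hcase
      have h2C : |f y - f x| ≤ 2*C := by
        calc |f y - f x| ≤ |f y| + |f x| := abs_sub _ _
          _ ≤ C + C := add_le_add (hC y hy) (hC x hx0.le)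
          _ = 2*C := by ring
      have hsq : δ'^2 ≤ (y-x)^2 := by
        rw [← sq_abs (y-x)]
        exact pow_le_pow_left₀ hδ'0.le hcase 2
      have h2 : 2*C ≤ c * (y-x)^2 := by
        rw [hc_def, div_mul_eq_mul_div, le_div_iff₀ (by positivity)]
        nlinarith
      have : 0 ≤ ε/4 := by positivity
      linarith
  -- eventual bound
  have htend : Tendsto (fun N : ℕ => c * M / N) atTop (nhds 0) :=
    tendsto_const_div_atTop_nhds_zero_nat (c * M)
  have hev : ∀ᶠ N : ℕ in atTop, c * M / N < ε/2 :=
    htend.eventually_lt_const (by positivity)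
  filter_upwards [hev, eventually_ge_atTop 1] with N hN1 hN2 x hx
  have hx0 : 0 < x := hKsub hx
  have hest := szasz_est f C hC N hN2 x hx0.le (ε/4) c (key x hx)
  rw [dist_comm, Real.dist_eq]
  have hNR : (0:ℝ) < N := by exact_mod_cast hN2
  have hxM : x ≤ M := hM0' x hx
  have hmono : c * x / N ≤ c * M / N := by
    gcongr
  calc |Real.exp (-(N * x)) * ∑' k : ℕ, f (k / N) * (N * x) ^ k / (Nat.factorial k) - f x|
      ≤ ε/4 + c * x / N := hest
    _ ≤ ε/4 + c * M / N := by linarith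
    _ < ε/4 + ε/2 := by linarith
    _ < ε := by linarith
end

section
/- For f continuous with compact support on [0,∞) and x > 0, the dilated Bernstein polynomial ∑_{k=0}^N C(N,k) f(k) (x/N)^k (1 − x/N)^{N−k} converges, as N → ∞, to the Szasz value ∑_{k=0}^∞ e^{-x} x^k/k! f(k). -/
open Filter

lemma choose_div_pow_tendsto (k : ℕ) :
    Tendsto (fun N : ℕ => (N.choose k : ℝ) / (N : ℝ) ^ k) atTop (nhds (1 / k.factorial)) := by
  have h1 : Tendsto (fun N : ℕ => (∏ i ∈ Finset.range k, ((N : ℝ) - i) / N) / k.factorial)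
      atTop (nhds (1 / k.factorial)) := by
    have hp : Tendsto (fun N : ℕ => ∏ i ∈ Finset.range k, ((N : ℝ) - i) / N) atTop
        (nhds (∏ _i ∈ Finset.range k, (1 : ℝ))) := by
      refine tendsto_finset_prod _ fun i _ => ?_
      have h : Tendsto (fun N : ℕ => 1 - (i : ℝ) / N) atTop (nhds (1 - 0)) :=
        tendsto_const_nhds.sub (tendsto_natCast_atTop_atTop.const_div_atTop _)
      rw [sub_zero] at h
      refine h.congr' ?_
      filter_upwards [eventually_gt_atTop 0] with N hN
      have : (N : ℝ) ≠ 0 := Nat.cast_ne_zero.mpr hN.ne'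
      field_simp
    rw [Finset.prod_const_one] at hp
    simpa using hp.div_const (k.factorial : ℝ)
  refine h1.congr' ?_
  filter_upwards [eventually_ge_atTop k, eventually_gt_atTop 0] with N hN hN0
  have hN0' : (N : ℝ) ≠ 0 := Nat.cast_ne_zero.mpr hN0.ne'
  have hdf : ((N.descFactorial k : ℕ) : ℝ) = ∏ i ∈ Finset.range k, ((N : ℝ) - i) := by
    rw [Nat.descFactorial_eq_prod_range, Nat.cast_prod]
    exact Finset.prod_congr rfl fun i hi => by
      rw [Nat.cast_sub (le_trans (Finset.mem_range.mp hi).le hN)]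
  have hc : (N.choose k : ℝ) * k.factorial = ∏ i ∈ Finset.range k, ((N : ℝ) - i) := by
    rw [← hdf, Nat.descFactorial_eq_factorial_mul_choose]; push_cast; ring
  rw [Finset.prod_div_distrib, Finset.prod_const, ← hc]
  have hfac : (k.factorial : ℝ) ≠ 0 := Nat.cast_ne_zero.mpr k.factorial_ne_zero
  field_simp
  simp

lemma pow_sub_tendsto (x : ℝ) (k : ℕ) :
    Tendsto (fun N : ℕ => (1 - x / N) ^ (N - k)) atTop (nhds (Real.exp (-x))) := by
  have hnum : Tendsto (fun N : ℕ => (1 - x / N) ^ N) atTop (nhds (Real.exp (-x))) := by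
    have := Real.tendsto_one_add_div_pow_exp (-x)
    exact this.congr fun N => by rw [neg_div, ← sub_eq_add_neg]
  have hden : Tendsto (fun N : ℕ => (1 - x / N) ^ k) atTop (nhds 1) := by
    have h : Tendsto (fun N : ℕ => 1 - x / N) atTop (nhds 1) := by
      simpa using tendsto_const_nhds.sub (tendsto_natCast_atTop_atTop.const_div_atTop x)
    simpa using h.pow k
  have hdiv := hnum.div hden one_ne_zero
  rw [div_one] at hdiv
  refine hdiv.congr' ?_
  filter_upwards [eventually_gt_atTop (max k ⌈|x|⌉₊)] with N hN
  have hk : k ≤ N := (le_max_left _ _).trans hN.le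
  have hxN : |x| < N := lt_of_le_of_lt (Nat.le_ceil _)
    (Nat.cast_lt.mpr ((le_max_right _ _).trans_lt hN))
  have hne : (1 : ℝ) - x / N ≠ 0 := by
    have hN0 : (0:ℝ) < N := lt_of_le_of_lt (abs_nonneg x) hxN
    have : x / N < 1 := by
      rw [div_lt_one hN0]; exact (le_abs_self x).trans_lt hxN
    linarith
  simp only [Pi.div_apply]
  rw [eq_comm, pow_sub₀ _ hne hk]; exact div_eq_mul_inv _ _

lemma term_tendsto (x : ℝ) (k : ℕ) :
    Tendsto (fun N : ℕ => (N.choose k : ℝ) * (x / N) ^ k * (1 - x / N) ^ (N - k)) atTop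
      (nhds (Real.exp (-x) * x ^ k / k.factorial)) := by
  have h1 := (choose_div_pow_tendsto k).mul_const (x ^ k)
  have h2 := h1.mul (pow_sub_tendsto x k)
  have heq : 1 / (k.factorial : ℝ) * x ^ k * Real.exp (-x)
      = Real.exp (-x) * x ^ k / k.factorial := by ring
  rw [heq] at h2
  exact h2.congr fun N => by rw [div_pow]; ring

/-- For `f` continuous with compact support and `x > 0`, the dilated Bernstein polynomial
`∑_{k=0}^N C(N,k) f(k) (x/N)^k (1 − x/N)^{N−k}` converges, as `N → ∞`, to the Szasz value
`∑_{k=0}^∞ e^{-x} x^k/k! f(k)`. -/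
theorem dilated_bernstein_tendsto_szasz (f : ℝ → ℝ) (hf : Continuous f)
    (hsupp : HasCompactSupport f) (x : ℝ) (hx : 0 < x) :
    Tendsto
      (fun N : ℕ => ∑ k ∈ Finset.range (N + 1),
        (N.choose k : ℝ) * f k * (x / N) ^ k * (1 - x / N) ^ (N - k))
      atTop
      (nhds (∑' k : ℕ, Real.exp (-x) * x ^ k / (Nat.factorial k) * f k)) := by
  obtain ⟨R, hR⟩ := hsupp.isCompact.isBounded.subset_closedBall 0
  set M : ℕ := ⌈R⌉₊ + 1 with hM
  have hfz : ∀ k : ℕ, M ≤ k → f k = 0 := by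
    intro k hk
    by_contra h
    have hk' : (k : ℝ) ∈ Metric.closedBall (0:ℝ) R := hR (subset_tsupport f h)
    rw [Metric.mem_closedBall, Real.dist_eq, sub_zero] at hk'
    have h1 : (k : ℝ) ≤ ⌈R⌉₊ := (le_abs_self _).trans (hk'.trans (Nat.le_ceil R))
    have : k ≤ ⌈R⌉₊ := Nat.cast_le.mp h1
    omega
  have htsum : (∑' k : ℕ, Real.exp (-x) * x ^ k / (Nat.factorial k) * f k)
      = ∑ k ∈ Finset.range M, Real.exp (-x) * x ^ k / (Nat.factorial k) * f k := by
    refine tsum_eq_sum fun k hk => ?_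
    rw [hfz k (Nat.le_of_not_lt (by simpa using hk)), mul_zero]
  rw [htsum]
  have hlim : Tendsto (fun N : ℕ => ∑ k ∈ Finset.range M,
      (N.choose k : ℝ) * f k * (x / N) ^ k * (1 - x / N) ^ (N - k)) atTop
      (nhds (∑ k ∈ Finset.range M, Real.exp (-x) * x ^ k / (Nat.factorial k) * f k)) := by
    refine tendsto_finset_sum _ fun k _ => ?_
    exact ((term_tendsto x k).mul_const (f k)).congr fun N => by ring
  refine hlim.congr' ?_
  filter_upwards [eventually_ge_atTop M] with N hN
  exact Finset.sum_subset (Finset.range_subset_range.mpr (by omega)) fun k _ hk' => by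
    rw [hfz k (Nat.le_of_not_lt (by simpa using hk'))]; ring
end

section
/- Negative binomial operator convergence: for f continuous and bounded on [0,∞) and x > 0, T_N(f)(x) = (1+x)^{-N} ∑_{j=0}^∞ (N)_j f(j/N) (x/(1+x))^j / j! converges to f(x) as N → ∞. -/
open Filter

/-- The rising factorial `(N)_j = N(N+1)⋯(N+j−1)`. -/
def risingFactorial (N j : ℕ) : ℕ := ∏ i ∈ Finset.range j, (N + i)

lemma risingFactorial_succ_left (N j : ℕ) :
    risingFactorial N (j + 1) = N * risingFactorial (N + 1) j := by
  simp only [risingFactorial, Finset.prod_range_succ']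
  rw [mul_comm, Nat.add_zero]
  congr 1
  exact Finset.prod_congr rfl fun i _ => by omega

lemma risingFactorial_eq_ascFactorial (N j : ℕ) :
    risingFactorial N j = N.ascFactorial j := by
  induction j with
  | zero => simp [risingFactorial]
  | succ j ih => rw [risingFactorial, Finset.prod_range_succ, ← risingFactorial, ih,
      Nat.ascFactorial_succ, mul_comm]

lemma risingFactorial_eq_choose (N j : ℕ) :
    risingFactorial (N + 1) j = j.factorial * (j + N).choose N := by
  rw [risingFactorial_eq_ascFactorial, Nat.ascFactorial_eq_factorial_mul_choose,
    add_comm j N, Nat.choose_symm_add]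

lemma hasSum_base (N : ℕ) {r : ℝ} (hr : |r| < 1) :
    HasSum (fun j : ℕ => (risingFactorial (N + 1) j : ℝ) / j.factorial * r ^ j)
      (1 / (1 - r) ^ (N + 1)) := by
  have h := hasSum_choose_mul_geometric_of_norm_lt_one (𝕜 := ℝ) N (by rwa [Real.norm_eq_abs])
  refine h.congr_fun fun j => ?_
  rw [risingFactorial_eq_choose]
  push_cast
  field_simp

section moments
variable {x : ℝ} (hx : 0 < x)

lemma habs (hx : 0 < x) : |x / (1 + x)| < 1 := by
  rw [abs_of_nonneg (by positivity)]
  rw [div_lt_one (by linarith)]; linarith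

lemma one_sub_p (hx : 0 < x) : 1 - x / (1 + x) = 1 / (1 + x) := by
  field_simp
  ring

lemma hasSum_S0 (N : ℕ) (hx : 0 < x) :
    HasSum (fun j : ℕ => (risingFactorial (N + 1) j : ℝ) / j.factorial * (x / (1 + x)) ^ j)
      ((1 + x) ^ (N + 1)) := by
  have h := hasSum_base N (habs hx)
  rwa [one_sub_p hx, one_div, one_div, inv_pow, inv_inv] at h

lemma hasSum_S1 (N : ℕ) (hx : 0 < x) :
    HasSum (fun j : ℕ => (j : ℝ) *
        ((risingFactorial (N + 1) j : ℝ) / j.factorial * (x / (1 + x)) ^ j))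
      ((N + 1) * x * (1 + x) ^ (N + 1)) := by
  have hx1 : (1 : ℝ) + x ≠ 0 := by positivity
  have key : HasSum (fun j : ℕ => (↑(j + 1) : ℝ) *
      ((risingFactorial (N + 1) (j + 1) : ℝ) / (j + 1).factorial * (x / (1 + x)) ^ (j + 1)))
      ((N + 1) * x * (1 + x) ^ (N + 1)) := by
    have h := (hasSum_S0 (N + 1) hx).mul_left (((N : ℝ) + 1) * (x / (1 + x)))
    have hval : ((N : ℝ) + 1) * (x / (1 + x)) * (1 + x) ^ (N + 1 + 1) =
        ((N : ℝ) + 1) * x * (1 + x) ^ (N + 1) := by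
      rw [pow_succ]; field_simp
    rw [hval] at h
    refine h.congr_fun fun j => ?_
    rw [risingFactorial_succ_left, Nat.factorial_succ]
    have hfj : (j.factorial : ℝ) ≠ 0 := Nat.cast_ne_zero.mpr j.factorial_ne_zero
    push_cast [pow_succ]
    field_simp
  have h2 := (hasSum_nat_add_iff (f := fun j : ℕ => (j : ℝ) *
      ((risingFactorial (N + 1) j : ℝ) / j.factorial * (x / (1 + x)) ^ j)) 1).mp key
  simpa using h2

lemma hasSum_S2 (N : ℕ) (hx : 0 < x) :
    HasSum (fun j : ℕ => (j : ℝ) * ((j : ℝ) - 1) *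
        ((risingFactorial (N + 1) j : ℝ) / j.factorial * (x / (1 + x)) ^ j))
      ((N + 1) * (N + 2) * x ^ 2 * (1 + x) ^ (N + 1)) := by
  have hx1 : (1 : ℝ) + x ≠ 0 := by positivity
  have key : HasSum (fun j : ℕ => (↑(j + 2) : ℝ) * ((↑(j + 2) : ℝ) - 1) *
      ((risingFactorial (N + 1) (j + 2) : ℝ) / (j + 2).factorial * (x / (1 + x)) ^ (j + 2)))
      ((N + 1) * (N + 2) * x ^ 2 * (1 + x) ^ (N + 1)) := by
    have h := (hasSum_S0 (N + 2) hx).mul_left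
      (((N : ℝ) + 1) * ((N : ℝ) + 2) * (x / (1 + x)) ^ 2)
    have hval : ((N : ℝ) + 1) * ((N : ℝ) + 2) * (x / (1 + x)) ^ 2 * (1 + x) ^ (N + 2 + 1) =
        ((N : ℝ) + 1) * ((N : ℝ) + 2) * x ^ 2 * (1 + x) ^ (N + 1) := by
      rw [show N + 2 + 1 = N + 1 + 1 + 1 by ring, pow_succ, pow_succ]
      field_simp; ring
    rw [hval] at h
    refine h.congr_fun fun j => ?_
    rw [show j + 2 = (j + 1) + 1 by ring, risingFactorial_succ_left,
      risingFactorial_succ_left, Nat.factorial_succ, Nat.factorial_succ]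
    have hfj : (j.factorial : ℝ) ≠ 0 := Nat.cast_ne_zero.mpr j.factorial_ne_zero
    push_cast [pow_succ]
    field_simp
    ring
  have h2 := (hasSum_nat_add_iff (f := fun j : ℕ => (j : ℝ) * ((j : ℝ) - 1) *
      ((risingFactorial (N + 1) j : ℝ) / j.factorial * (x / (1 + x)) ^ j)) 2).mp key
  simpa [Finset.sum_range_succ] using h2

lemma hasSum_var (N : ℕ) (hx : 0 < x) :
    HasSum (fun j : ℕ => ((j : ℝ) - (N + 1) * x) ^ 2 *
        ((risingFactorial (N + 1) j : ℝ) / j.factorial * (x / (1 + x)) ^ j))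
      ((N + 1) * x * (1 + x) * (1 + x) ^ (N + 1)) := by
  have h := ((hasSum_S2 N hx).add ((hasSum_S1 N hx).mul_left (1 - 2 * ((N : ℝ) + 1) * x))).add
    ((hasSum_S0 N hx).mul_left ((((N : ℝ) + 1) * x) ^ 2))
  have hval : (N + 1) * (N + 2) * x ^ 2 * (1 + x) ^ (N + 1) +
      (1 - 2 * ((N : ℝ) + 1) * x) * ((N + 1) * x * (1 + x) ^ (N + 1)) +
      (((N : ℝ) + 1) * x) ^ 2 * (1 + x) ^ (N + 1) =
      ((N : ℝ) + 1) * x * (1 + x) * (1 + x) ^ (N + 1) := by ring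
  rw [hval] at h
  refine h.congr_fun fun j => ?_
  ring

end moments

/-- Negative binomial operator convergence: for `f` continuous and bounded on `[0,∞)`
and `x > 0`, `T_N(f)(x) = (1+x)^{-N} ∑_{j=0}^∞ (N)_j f(j/N) (x/(1+x))^j / j!`
converges to `f(x)` as `N → ∞`. -/
theorem negative_binomial_operator_tendsto (f : ℝ → ℝ) (hf : Continuous f)
    (hbd : ∃ C : ℝ, ∀ t : ℝ, 0 ≤ t → |f t| ≤ C) (x : ℝ) (hx : 0 < x) :
    Tendsto
      (fun N : ℕ =>
        (1 + x) ^ (-(N : ℤ)) *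
          ∑' j : ℕ, (risingFactorial N j : ℝ) * f ((j : ℝ) / N) * (x / (1 + x)) ^ j /
            (Nat.factorial j))
      atTop (nhds (f x)) := by
  obtain ⟨C, hC⟩ := hbd
  have hC0 : 0 ≤ C := (abs_nonneg _).trans (hC 0 le_rfl)
  have hx1 : (0 : ℝ) < 1 + x := by linarith
  rw [Metric.tendsto_atTop]
  intro ε hε
  -- continuity at x
  obtain ⟨δ, hδ, hδf⟩ := Metric.continuousAt_iff.mp hf.continuousAt (ε / 2) (by linarith)
  set K : ℝ := 2 * C * x * (1 + x) / δ ^ 2 with hK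
  have hK0 : 0 ≤ K := by positivity
  obtain ⟨N₀, hN₀⟩ := exists_nat_gt (K / (ε / 2))
  refine ⟨N₀ + 1, fun N hN => ?_⟩
  obtain ⟨M, rfl⟩ : ∃ M, N = M + 1 := ⟨N - 1, by omega⟩
  -- notation
  set a : ℕ → ℝ := fun j => (risingFactorial (M + 1) j : ℝ) / j.factorial * (x / (1 + x)) ^ j
    with ha
  have ha0 : ∀ j, 0 ≤ a j := fun j => by
    apply mul_nonneg (by positivity)
    positivity
  have hA : HasSum a ((1 + x) ^ (M + 1)) := hasSum_S0 M hx
  have hVar := hasSum_var M hx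
  set M1 : ℝ := (M : ℝ) + 1 with hM1
  have hM1pos : (0 : ℝ) < M1 := by positivity
  -- summability of f-weighted series
  have hfa : Summable (fun j : ℕ => f ((j : ℝ) / M1) * a j) := by
    apply Summable.of_norm_bounded (hA.summable.mul_left C)
    intro j
    rw [Real.norm_eq_abs, abs_mul, abs_of_nonneg (ha0 j)]
    exact mul_le_mul_of_nonneg_right (hC _ (by positivity)) (ha0 j)
  -- rewrite the operator value
  have hTrw : (∑' j : ℕ, (risingFactorial (M + 1) j : ℝ) * f ((j : ℝ) / (M + 1 : ℕ)) *
      (x / (1 + x)) ^ j / (Nat.factorial j)) = ∑' j : ℕ, f ((j : ℝ) / M1) * a j := by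
    refine tsum_congr fun j => ?_
    rw [ha]
    push_cast
    ring
  -- pointwise bound
  have hptw : ∀ t : ℝ, 0 ≤ t → |f t - f x| ≤ ε / 2 + 2 * C / δ ^ 2 * (t - x) ^ 2 := by
    intro t ht
    by_cases h : |t - x| < δ
    · have h1 := le_of_lt (hδf (by rwa [Real.dist_eq]))
      rw [Real.dist_eq] at h1
      have : 0 ≤ 2 * C / δ ^ 2 * (t - x) ^ 2 := by positivity
      linarith
    · push_neg at h
      have h1 : |f t - f x| ≤ 2 * C := by
        calc |f t - f x| ≤ |f t| + |f x| := abs_sub _ _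
        _ ≤ C + C := add_le_add (hC t ht) (hC x hx.le)
        _ = 2 * C := by ring
      have h2 : δ ^ 2 ≤ (t - x) ^ 2 := by
        rw [← sq_abs (t - x)]
        exact pow_le_pow_left₀ hδ.le h 2
      have h3 : 2 * C ≤ 2 * C / δ ^ 2 * (t - x) ^ 2 := by
        rw [div_mul_eq_mul_div, le_div_iff₀ (by positivity)]
        exact mul_le_mul_of_nonneg_left h2 (by positivity)
      linarith
  -- bounding series
  have hg : HasSum (fun j : ℕ => (ε / 2 + 2 * C / δ ^ 2 * ((j : ℝ) / M1 - x) ^ 2) * a j)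
      (ε / 2 * (1 + x) ^ (M + 1) +
        2 * C / δ ^ 2 * (1 / M1 ^ 2) * (M1 * x * (1 + x) * (1 + x) ^ (M + 1))) := by
    have h := (hA.mul_left (ε / 2)).add (hVar.mul_left (2 * C / δ ^ 2 * (1 / M1 ^ 2)))
    refine h.congr_fun fun j => ?_
    have : ((j : ℝ) / M1 - x) ^ 2 = 1 / M1 ^ 2 * ((j : ℝ) - M1 * x) ^ 2 := by
      field_simp
    rw [this]
    ring
  have hdiff : HasSum (fun j : ℕ => (f ((j : ℝ) / M1) - f x) * a j)
      ((∑' j : ℕ, f ((j : ℝ) / M1) * a j) - f x * (1 + x) ^ (M + 1)) := by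
    have h := hfa.hasSum.sub (hA.mul_left (f x))
    refine h.congr_fun fun j => ?_
    ring
  -- |sum of diff| ≤ sum of g
  have habs : |(∑' j : ℕ, f ((j : ℝ) / M1) * a j) - f x * (1 + x) ^ (M + 1)| ≤
      ε / 2 * (1 + x) ^ (M + 1) +
        2 * C / δ ^ 2 * (1 / M1 ^ 2) * (M1 * x * (1 + x) * (1 + x) ^ (M + 1)) := by
    rw [abs_le]
    constructor
    · refine hasSum_le (fun j => ?_) hg.neg hdiff
      have h1 : |(f ((j : ℝ) / M1) - f x) * a j| ≤
          (ε / 2 + 2 * C / δ ^ 2 * ((j : ℝ) / M1 - x) ^ 2) * a j := by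
        rw [abs_mul, abs_of_nonneg (ha0 j)]
        exact mul_le_mul_of_nonneg_right (hptw _ (by positivity)) (ha0 j)
      have := neg_abs_le ((f ((j : ℝ) / M1) - f x) * a j)
      linarith
    · refine hasSum_le (fun j => ?_) hdiff hg
      have h1 : |(f ((j : ℝ) / M1) - f x) * a j| ≤
          (ε / 2 + 2 * C / δ ^ 2 * ((j : ℝ) / M1 - x) ^ 2) * a j := by
        rw [abs_mul, abs_of_nonneg (ha0 j)]
        exact mul_le_mul_of_nonneg_right (hptw _ (by positivity)) (ha0 j)
      have := le_abs_self ((f ((j : ℝ) / M1) - f x) * a j)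
      linarith
  -- final computation
  have hzpow : (1 + x) ^ (-(((M + 1 : ℕ)) : ℤ)) = ((1 + x) ^ (M + 1))⁻¹ := by
    rw [zpow_neg, zpow_natCast]
  rw [Real.dist_eq, hTrw, hzpow]
  have hq : (0 : ℝ) < (1 + x) ^ (M + 1) := by positivity
  have key : ((1 + x) ^ (M + 1))⁻¹ * (∑' j : ℕ, f ((j : ℝ) / M1) * a j) - f x =
      ((1 + x) ^ (M + 1))⁻¹ *
        ((∑' j : ℕ, f ((j : ℝ) / M1) * a j) - f x * (1 + x) ^ (M + 1)) := by
    field_simp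
  rw [key, abs_mul, abs_of_pos (inv_pos.mpr hq)]
  have hb : ((1 + x) ^ (M + 1))⁻¹ *
      |(∑' j : ℕ, f ((j : ℝ) / M1) * a j) - f x * (1 + x) ^ (M + 1)| ≤
      ε / 2 + K / M1 := by
    have h2 : ((1 + x) ^ (M + 1))⁻¹ * (ε / 2 * (1 + x) ^ (M + 1) +
        2 * C / δ ^ 2 * (1 / M1 ^ 2) * (M1 * x * (1 + x) * (1 + x) ^ (M + 1))) =
        ε / 2 + K / M1 := by
      rw [hK]
      field_simp
    rw [← h2]
    exact mul_le_mul_of_nonneg_left habs (by positivity)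
  have hlast : K / M1 < ε / 2 := by
    rw [div_lt_iff₀ hM1pos]
    have h1 : K < N₀ * (ε / 2) := by
      rw [div_lt_iff₀ (by linarith) ] at hN₀
      linarith
    have h2 : (N₀ : ℝ) ≤ M1 := by
      rw [hM1]
      have : (N₀ : ℝ) ≤ (M : ℝ) + 1 := by
        have : N₀ ≤ M + 1 := by omega
        exact_mod_cast this
      linarith
    calc K < N₀ * (ε / 2) := h1
    _ ≤ M1 * (ε / 2) := by
        apply mul_le_mul_of_nonneg_right h2 (by linarith)
    _ = ε / 2 * M1 := by ring
  calc ((1 + x) ^ (M + 1))⁻¹ *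
      |(∑' j : ℕ, f ((j : ℝ) / M1) * a j) - f x * (1 + x) ^ (M + 1)|
      ≤ ε / 2 + K / M1 := hb
  _ < ε / 2 + ε / 2 := by linarith
  _ = ε := by ring
end
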